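/- Let U ⊆ ℂ be open with T·(T⁴−1) ≠ 0 for all T ∈ U, let V ⊆ ℂ be open with T² ∈ V and T²·((T²)²−1) ≠ 0 for all T ∈ U, let ψ solve ψ'' = Q₁·ψ on V, and let g : ℂ → ℂ be twice differentiable and nonvanishing on U with g(T)² = 2T for all T ∈ U. Then Φ(T) := ψ(T²)/g(T) solves Φ''(T) = −(1/4)·(T⁸+14T⁴+1)/(T²(T⁴−1)²)·Φ(T) on U. -/

import Mathlib

open Complex

/-- `f` solves the equation `ψ'' = Q·ψ` on the open set `U`. -/
def SolvesOn (Q f : ℂ → ℂ) (U : Set ℂ) : Prop :=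
  (∀ x ∈ U, DifferentiableAt ℂ f x) ∧ (∀ x ∈ U, DifferentiableAt ℂ (deriv f) x) ∧
    ∀ x ∈ U, deriv (deriv f) x = Q x * f x

/-- The coefficient of the normal form (1') of the first Chudnovsky equation. -/
noncomputable def Q₁ (x : ℂ) : ℂ :=
  -(1 / 4) * (x ^ 2 + 1) ^ 2 / (x ^ 2 * (x - 1) ^ 2 * (x + 1) ^ 2)

/-- Auxiliary: the first derivative of `T ↦ ψ (T²) / g T`. -/
noncomputable def Faux (ψ g : ℂ → ℂ) (T : ℂ) : ℂ :=
  (deriv ψ (T ^ 2) * (2 * T) * g T - ψ (T ^ 2) * deriv g T) / g T ^ 2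

set_option maxHeartbeats 2000000 in
theorem chudnovsky_one_square_substitution
    (U V : Set ℂ) (hU : IsOpen U) (hV : IsOpen V)
    (hUne : ∀ T ∈ U, T * (T ^ 4 - 1) ≠ 0)
    (hTV : ∀ T ∈ U, T ^ 2 ∈ V)
    (hVne : ∀ T ∈ U, T ^ 2 * ((T ^ 2) ^ 2 - 1) ≠ 0)
    (ψ g : ℂ → ℂ)
    (hψ : SolvesOn Q₁ ψ V)
    (hg1 : ∀ T ∈ U, DifferentiableAt ℂ g T)
    (hg2 : ∀ T ∈ U, DifferentiableAt ℂ (deriv g) T)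
    (hgne : ∀ T ∈ U, g T ≠ 0)
    (hgsq : ∀ T ∈ U, g T ^ 2 = 2 * T) :
    SolvesOn (fun T => -(1 / 4) * (T ^ 8 + 14 * T ^ 4 + 1) / (T ^ 2 * (T ^ 4 - 1) ^ 2))
      (fun T => ψ (T ^ 2) / g T) U := by
  obtain ⟨hψ1, hψ2, hψ3⟩ := hψ
  have hsq : ∀ T : ℂ, HasDerivAt (fun T : ℂ => T ^ 2) (2 * T) T := by
    intro T; simpa using hasDerivAt_pow 2 T
  have hcomp : ∀ T ∈ U, HasDerivAt (fun T => ψ (T ^ 2)) (deriv ψ (T ^ 2) * (2 * T)) T := by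
    intro T hT
    simpa [Function.comp_def] using ((hψ1 _ (hTV T hT)).hasDerivAt).comp T (hsq T)
  have hcomp' : ∀ T ∈ U,
      HasDerivAt (fun T => deriv ψ (T ^ 2)) (deriv (deriv ψ) (T ^ 2) * (2 * T)) T := by
    intro T hT
    simpa [Function.comp_def] using ((hψ2 _ (hTV T hT)).hasDerivAt).comp T (hsq T)
  have hgg1 : ∀ T ∈ U, g T * deriv g T = 1 := by
    intro T hT
    have e1 : HasDerivAt (fun T => g T ^ 2) (2 * g T ^ 1 * deriv g T) T := by
      have := (hg1 T hT).hasDerivAt.pow 2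
      norm_num at this
      exact this.congr_deriv (by ring)
    have e2 : HasDerivAt (fun T : ℂ => 2 * T) 2 T := by
      simpa using (hasDerivAt_id T).const_mul (2 : ℂ)
    have e3 : HasDerivAt (fun T : ℂ => 2 * T) (2 * g T ^ 1 * deriv g T) T :=
      e1.congr_of_eventuallyEq ((Filter.eventuallyEq_of_mem (hU.mem_nhds hT) hgsq).symm)
    have h := e3.unique e2
    linear_combination h / 2
  have hgg2 : ∀ T ∈ U, deriv g T * deriv g T + g T * deriv (deriv g) T = 0 := by
    intro T hT
    have e1 : HasDerivAt (fun T => g T * deriv g T)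
        (deriv g T * deriv g T + g T * deriv (deriv g) T) T :=
      (hg1 T hT).hasDerivAt.mul (hg2 T hT).hasDerivAt
    have e2 : HasDerivAt (fun _ : ℂ => (1 : ℂ))
        (deriv g T * deriv g T + g T * deriv (deriv g) T) T :=
      e1.congr_of_eventuallyEq
        ((Filter.eventuallyEq_of_mem (hU.mem_nhds hT) fun x hx => hgg1 x hx).symm)
    simpa using e2.unique (hasDerivAt_const T 1)
  have hΦdAt : ∀ T ∈ U, HasDerivAt (fun T => ψ (T ^ 2) / g T) (Faux ψ g T) T := by
    intro T hT
    exact (hcomp T hT).div (hg1 T hT).hasDerivAt (hgne T hT)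
  have hderivΦ : ∀ T ∈ U, deriv (fun T => ψ (T ^ 2) / g T) T = Faux ψ g T :=
    fun T hT => (hΦdAt T hT).deriv
  have hFdAt : ∀ T ∈ U, HasDerivAt (Faux ψ g)
      ((((deriv (deriv ψ) (T ^ 2) * (2 * T) * (2 * T) + deriv ψ (T ^ 2) * 2) * g T +
          deriv ψ (T ^ 2) * (2 * T) * deriv g T -
          (deriv ψ (T ^ 2) * (2 * T) * deriv g T + ψ (T ^ 2) * deriv (deriv g) T)) * g T ^ 2 -
          (deriv ψ (T ^ 2) * (2 * T) * g T - ψ (T ^ 2) * deriv g T) *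
            (2 * g T ^ 1 * deriv g T)) / (g T ^ 2) ^ 2) T := by
    intro T hT
    have e2T : HasDerivAt (fun T : ℂ => 2 * T) 2 T := by
      simpa using (hasDerivAt_id T).const_mul (2 : ℂ)
    have den : HasDerivAt (fun T => g T ^ 2) (2 * g T ^ 1 * deriv g T) T := by
      have := (hg1 T hT).hasDerivAt.pow 2
      norm_num at this
      exact this.congr_deriv (by ring)
    exact ((((hcomp' T hT).mul e2T).mul (hg1 T hT).hasDerivAt).sub
        ((hcomp T hT).mul (hg2 T hT).hasDerivAt)).div den (pow_ne_zero 2 (hgne T hT))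
  refine ⟨fun T hT => (hΦdAt T hT).differentiableAt, ?_, ?_⟩
  · intro T hT
    have hev : deriv (fun T => ψ (T ^ 2) / g T) =ᶠ[nhds T] Faux ψ g :=
      Filter.eventuallyEq_of_mem (hU.mem_nhds hT) hderivΦ
    exact (hFdAt T hT).differentiableAt.congr_of_eventuallyEq hev
  · intro T hT
    have hev : deriv (fun T => ψ (T ^ 2) / g T) =ᶠ[nhds T] Faux ψ g :=
      Filter.eventuallyEq_of_mem (hU.mem_nhds hT) hderivΦ
    rw [hev.deriv_eq, (hFdAt T hT).deriv]
    obtain ⟨hT0, h41⟩ := mul_ne_zero_iff.mp (hUne T hT)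
    have hzm : T ^ 2 - 1 ≠ 0 := fun h => h41 (by linear_combination (T ^ 2 + 1) * h)
    have hzp : T ^ 2 + 1 ≠ 0 := fun h => h41 (by linear_combination (T ^ 2 - 1) * h)
    have hz0 : T ^ 2 ≠ 0 := pow_ne_zero 2 hT0
    have hGne := hgne T hT
    have hG1 : deriv g T = 1 / g T := by
      rw [eq_div_iff hGne]
      linear_combination hgg1 T hT
    have hG2 : deriv (deriv g) T = -(1 / g T ^ 3) := by
      have h := hgg2 T hT
      have h1 := hgg1 T hT
      field_simp
      linear_combination (g T ^ 2) * h - (g T * deriv g T + 1) * h1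
    rw [hψ3 _ (hTV T hT), hG1, hG2]
    simp only [Q₁]
    have hGsq := hgsq T hT
    set A := ψ (T ^ 2) with hA
    clear_value A
    set B := deriv ψ (T ^ 2) with hB
    clear_value B
    set G := g T with hG
    clear_value G
    have hTsub : T = G ^ 2 / 2 := by rw [hGsq]; ring
    subst hTsub
    have h16 : G ^ 8 - 16 ≠ 0 := fun h => h41 (by linear_combination h / 16)
    have hden : ((G ^ 2 / 2) ^ 2) ^ 2 * ((G ^ 2 / 2) ^ 2 - 1) ^ 2 * ((G ^ 2 / 2) ^ 2 + 1) ^ 2 ≠ 0 :=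
      mul_ne_zero (mul_ne_zero (pow_ne_zero _ hz0) (pow_ne_zero _ hzm)) (pow_ne_zero _ hzp)
    have hden2 : G ^ 8 * (G ^ 8 - 16) ^ 2 ≠ 0 :=
      mul_ne_zero (pow_ne_zero _ hGne) (pow_ne_zero _ h16)
    rw [show -(1 / 4) * (((G ^ 2 / 2) ^ 2) ^ 2 + 1) ^ 2 /
          (((G ^ 2 / 2) ^ 2) ^ 2 * ((G ^ 2 / 2) ^ 2 - 1) ^ 2 * ((G ^ 2 / 2) ^ 2 + 1) ^ 2)
        = -(4 * (G ^ 8 + 16) ^ 2) / (G ^ 8 * (G ^ 8 - 16) ^ 2) by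
      rw [div_eq_div_iff hden hden2]; ring]
    rw [show -(1 / 4) * ((G ^ 2 / 2) ^ 8 + 14 * (G ^ 2 / 2) ^ 4 + 1) / ((G ^ 2 / 2) ^ 2 * ((G ^ 2 / 2) ^ 4 - 1) ^ 2)
        = -(G ^ 16 + 224 * G ^ 8 + 256) / (G ^ 4 * (G ^ 8 - 16) ^ 2) by
      rw [div_eq_div_iff (mul_ne_zero hz0 (pow_ne_zero _ h41))
        (mul_ne_zero (pow_ne_zero _ hGne) (pow_ne_zero _ h16))]; ring]
    have hD : G ^ 18 * 256 - G ^ 26 * 32 + G ^ 34 ≠ 0 := by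
      have h' : G ^ 18 * 256 - G ^ 26 * 32 + G ^ 34 = G ^ 18 * (G ^ 8 - 16) ^ 2 := by ring
      rw [h']
      exact mul_ne_zero (pow_ne_zero _ hGne) (pow_ne_zero _ h16)
    field_simp [h16, hD]
    have hc : (G ^ 18 * 256 - G ^ 26 * 32 + G ^ 34)⁻¹ * (G ^ 18 * 256 - G ^ 26 * 32 + G ^ 34) = 1 :=
      inv_mul_cancel₀ hD
    ring
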